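/- arXiv:2103.13715 — 2 statements merged into one kernel-verified Lean document; each statement's English description precedes it below -/
import Mathlib

section
/- Define G_{1,n−1}^{α,β} = (1/n!) ∑_{j=0}^{n} (−1)^j C(n,j) p(α+j) F_{n−1}^β(α+j) and G_{2,n−1}^{α,β} = −(1/(n−1)!) ∑_{j=0}^{n−1} (−1)^j C(n−1,j) p(α+j) F_n^β(α+j), where F_m^β(x) = ∏_{k=0}^{m} 1/(x−β−k). If deg p ≤ 2n−1 then G_{1,n−1}^{α,β} + G_{2,n−1}^{β,α} = 0. -/
/-- `F_m^β(x) = ∏_{k=0}^{m} 1/(x−β−k)` (a product of `m+1` factors). -/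
noncomputable def Ffun (m : ℕ) (β x : ℝ) : ℝ :=
  ∏ k ∈ Finset.range (m + 1), (1 / (x - β - (k : ℝ)))

/-- `G_{1,n−1}^{α,β} = (1/n!) ∑_{j=0}^{n} (−1)^j C(n,j) p(α+j) F_{n−1}^β(α+j)`. -/
noncomputable def G1 (n : ℕ) (p : Polynomial ℝ) (α β : ℝ) : ℝ :=
  (1 / (Nat.factorial n : ℝ)) *
    ∑ j ∈ Finset.range (n + 1), (-1 : ℝ) ^ j * (Nat.choose n j : ℝ) *
      p.eval (α + (j : ℝ)) * Ffun (n - 1) β (α + (j : ℝ))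

/-- `G_{2,n−1}^{α,β} = −(1/(n−1)!) ∑_{j=0}^{n−1} (−1)^j C(n−1,j) p(α+j) F_n^β(α+j)`. -/
noncomputable def G2 (n : ℕ) (p : Polynomial ℝ) (α β : ℝ) : ℝ :=
  -((1 / (Nat.factorial (n - 1) : ℝ)) *
    ∑ j ∈ Finset.range n, (-1 : ℝ) ^ j * (Nat.choose (n - 1) j : ℝ) *
      p.eval (α + (j : ℝ)) * Ffun n β (α + (j : ℝ)))

open Polynomial Finset

lemma leadingCoeff_basisDivisor {F : Type*} [Field F] (x y : F) :
    (Lagrange.basisDivisor x y).leadingCoeff = (x - y)⁻¹ := by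
  rcases eq_or_ne x y with rfl | h
  · simp [Lagrange.basisDivisor_self]
  · rw [Lagrange.basisDivisor, leadingCoeff_mul, leadingCoeff_C,
      leadingCoeff_X_sub_C, mul_one]

lemma coeff_basis_top {F ι : Type*} [Field F] [DecidableEq ι] {s : Finset ι} {v : ι → F}
    (hvs : Set.InjOn v s) {i : ι} (hi : i ∈ s) :
    (Lagrange.basis s v i).coeff (s.card - 1) = Lagrange.nodalWeight s v i := by
  have hd := Lagrange.natDegree_basis hvs hi
  rw [← hd, coeff_natDegree, Lagrange.basis, leadingCoeff_prod]
  simp only [leadingCoeff_basisDivisor]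
  rfl

lemma sum_nodalWeight_mul_eval {F ι : Type*} [Field F] [DecidableEq ι] (s : Finset ι) (v : ι → F)
    (hvs : Set.InjOn v s) (p : F[X]) (hp : p.degree < ((s.card - 1 : ℕ) : WithBot ℕ)) :
    ∑ i ∈ s, Lagrange.nodalWeight s v i * p.eval (v i) = 0 := by
  have h1 : p = Lagrange.interpolate s v (fun i => p.eval (v i)) :=
    Lagrange.eq_interpolate hvs
      (hp.trans_le (by exact_mod_cast Nat.sub_le s.card 1))
  have h2 := congrArg (fun q => Polynomial.coeff q (s.card - 1)) h1
  simp only [Lagrange.interpolate_apply, finset_sum_coeff, coeff_C_mul] at h2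
  rw [coeff_eq_zero_of_degree_lt hp] at h2
  refine Eq.trans (Finset.sum_congr rfl fun i hi => ?_) h2.symm
  rw [coeff_basis_top hvs hi, mul_comm]

lemma prod_range_sub_nat (j : ℕ) :
    ∏ i ∈ Finset.range j, ((j : ℝ) - (i : ℝ)) = (Nat.factorial j : ℝ) := by
  have : ∏ i ∈ Finset.range j, ((j : ℝ) - (i : ℝ)) =
      ((∏ i ∈ Finset.range j, (j - i) : ℕ) : ℝ) := by
    rw [Nat.cast_prod]
    exact Finset.prod_congr rfl fun i hi => by
      rw [Nat.cast_sub (le_of_lt (Finset.mem_range.mp hi))]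
  rw [this, ← Nat.descFactorial_eq_prod_range, Nat.descFactorial_self]

lemma prod_range_add_one_eq_factorial (m : ℕ) :
    ∏ i ∈ Finset.range m, ((i : ℝ) + 1) = (Nat.factorial m : ℝ) := by
  induction m with
  | zero => simp
  | succ m ih => rw [Finset.prod_range_succ, Nat.factorial_succ, ih]; push_cast; ring

lemma prod_erase_range (n j : ℕ) (hj : j ≤ n) :
    ∏ i ∈ (Finset.range (n+1)).erase j, ((j : ℝ) - (i : ℝ)) =
      (-1) ^ (n - j) * (Nat.factorial j : ℝ) * (Nat.factorial (n - j) : ℝ) := by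
  have hset : (Finset.range (n+1)).erase j =
      Finset.range j ∪ Finset.Ico (j+1) (n+1) := by
    ext x
    simp only [Finset.mem_erase, Finset.mem_range, Finset.mem_union, Finset.mem_Ico]
    omega
  have hdisj : Disjoint (Finset.range j) (Finset.Ico (j+1) (n+1)) := by
    rw [Finset.disjoint_left]
    intro a ha hb
    simp only [Finset.mem_range] at ha
    simp only [Finset.mem_Ico] at hb
    omega
  rw [hset, Finset.prod_union hdisj, prod_range_sub_nat]
  have h2 : ∏ i ∈ Finset.Ico (j+1) (n+1), ((j : ℝ) - (i : ℝ)) =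
      (-1) ^ (n - j) * (Nat.factorial (n - j) : ℝ) := by
    rw [Finset.prod_Ico_eq_prod_range]
    have hnm : n + 1 - (j + 1) = n - j := by omega
    rw [hnm]
    have : ∀ k ∈ Finset.range (n - j), ((j : ℝ) - ((j + 1 + k : ℕ) : ℝ)) =
        -(((k : ℝ)) + 1) := by
      intro k _
      push_cast
      ring
    rw [Finset.prod_congr rfl this]
    rw [show (fun k : ℕ => -((k : ℝ) + 1)) = (fun k : ℕ => (-1) * ((k : ℝ) + 1)) by
      funext k; ring]
    rw [Finset.prod_mul_distrib, Finset.prod_const]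
    congr 1
    · simp
    · exact prod_range_add_one_eq_factorial (n - j)
  rw [h2]
  ring

/-- The nodes: `α, α+1, …, α+n, β, β+1, …, β+(n−1)`. -/
noncomputable def vfun (n : ℕ) (α β : ℝ) : ℕ → ℝ :=
  fun i => if i ≤ n then α + (i : ℝ) else β + ((i - (n+1) : ℕ) : ℝ)

lemma vfun_le {n i : ℕ} (α β : ℝ) (h : i ≤ n) : vfun n α β i = α + (i : ℝ) := if_pos h

lemma vfun_gt {n i : ℕ} (α β : ℝ) (h : ¬ i ≤ n) :
    vfun n α β i = β + ((i - (n+1) : ℕ) : ℝ) := if_neg h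

lemma vfun_injOn (n : ℕ) (α β : ℝ) (hαβ : ∀ m : ℤ, α - β ≠ (m : ℝ)) :
    Set.InjOn (vfun n α β) (Finset.range (2*n+1)) := by
  have hβα : ∀ m : ℤ, β - α ≠ (m : ℝ) := by
    intro m h
    apply hαβ (-m)
    push_cast
    linarith
  intro i hi i' hi' h
  simp only [Finset.coe_range, Set.mem_Iio] at hi hi'
  by_cases h1 : i ≤ n <;> by_cases h2 : i' ≤ n
  · rw [vfun_le α β h1, vfun_le α β h2] at h
    exact_mod_cast Nat.cast_injective (add_left_cancel h)
  · rw [vfun_le α β h1, vfun_gt α β h2] at h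
    exfalso
    apply hαβ (((i' - (n+1) : ℕ) : ℤ) - (i : ℤ))
    push_cast
    linarith
  · rw [vfun_gt α β h1, vfun_le α β h2] at h
    exfalso
    apply hβα ((i' : ℤ) - ((i - (n+1) : ℕ) : ℤ))
    push_cast
    linarith
  · rw [vfun_gt α β h1, vfun_gt α β h2] at h
    have : ((i - (n+1) : ℕ) : ℝ) = ((i' - (n+1) : ℕ) : ℝ) := by linarith
    have := Nat.cast_injective this
    omega

lemma erase_split_low (n j : ℕ) (hj : j ≤ n) :
    (Finset.range (2*n+1)).erase j =
      (Finset.range (n+1)).erase j ∪ Finset.Ico (n+1) (2*n+1) := by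
  ext x
  simp only [Finset.mem_erase, Finset.mem_range, Finset.mem_union, Finset.mem_Ico]
  omega

lemma erase_split_high (n k : ℕ) (hk : k < n) :
    (Finset.range (2*n+1)).erase (n+1+k) =
      Finset.range (n+1) ∪ ((Finset.Ico (n+1) (2*n+1)).erase (n+1+k)) := by
  ext x
  simp only [Finset.mem_erase, Finset.mem_range, Finset.mem_union, Finset.mem_Ico]
  omega

lemma nodalWeight_low (n : ℕ) (hn : 1 ≤ n) (α β : ℝ) {j : ℕ} (hj : j ≤ n) :
    Lagrange.nodalWeight (Finset.range (2*n+1)) (vfun n α β) j =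
      ((-1 : ℝ) ^ (n - j) * (Nat.factorial j : ℝ) * (Nat.factorial (n - j) : ℝ))⁻¹ *
        Ffun (n - 1) β (α + (j : ℝ)) := by
  rw [Lagrange.nodalWeight, erase_split_low n j hj, Finset.prod_union (by
    rw [Finset.disjoint_left]
    intro a ha hb
    simp only [Finset.mem_erase, Finset.mem_range] at ha
    simp only [Finset.mem_Ico] at hb
    omega)]
  have h1 : ∏ i ∈ (Finset.range (n+1)).erase j, (vfun n α β j - vfun n α β i)⁻¹ =
      ((-1 : ℝ) ^ (n - j) * (Nat.factorial j : ℝ) * (Nat.factorial (n - j) : ℝ))⁻¹ := by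
    rw [← prod_erase_range n j hj, ← Finset.prod_inv_distrib]
    refine Finset.prod_congr rfl fun i hi => ?_
    rcases Finset.mem_erase.mp hi with ⟨_, hi2⟩
    rw [vfun_le α β hj, vfun_le α β (Nat.lt_succ_iff.mp (Finset.mem_range.mp hi2))]
    ring_nf
  have h2 : ∏ i ∈ Finset.Ico (n+1) (2*n+1), (vfun n α β j - vfun n α β i)⁻¹ =
      Ffun (n - 1) β (α + (j : ℝ)) := by
    rw [Finset.prod_Ico_eq_prod_range]
    have hnm : 2*n + 1 - (n + 1) = n := by omega
    rw [hnm, Ffun, show n - 1 + 1 = n from Nat.succ_pred_eq_of_pos hn]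
    refine Finset.prod_congr rfl fun k hk => ?_
    rw [vfun_le α β hj, vfun_gt α β (by omega), show n + 1 + k - (n+1) = k from by omega,
      one_div]
    ring_nf
  rw [h1, h2]

lemma nodalWeight_high (n : ℕ) (hn : 1 ≤ n) (α β : ℝ) {k : ℕ} (hk : k < n) :
    Lagrange.nodalWeight (Finset.range (2*n+1)) (vfun n α β) (n+1+k) =
      ((-1 : ℝ) ^ (n - 1 - k) * (Nat.factorial k : ℝ) * (Nat.factorial (n - 1 - k) : ℝ))⁻¹ *
        Ffun n α (β + (k : ℝ)) := by
  rw [Lagrange.nodalWeight, erase_split_high n k hk, Finset.prod_union (by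
    rw [Finset.disjoint_left]
    intro a ha hb
    simp only [Finset.mem_range] at ha
    simp only [Finset.mem_erase, Finset.mem_Ico] at hb
    omega)]
  have hv : vfun n α β (n+1+k) = β + (k : ℝ) := by
    rw [vfun_gt α β (by omega), show n + 1 + k - (n+1) = k from by omega]
  have h1 : ∏ i ∈ Finset.range (n+1), (vfun n α β (n+1+k) - vfun n α β i)⁻¹ =
      Ffun n α (β + (k : ℝ)) := by
    rw [Ffun]
    refine Finset.prod_congr rfl fun i hi => ?_
    rw [hv, vfun_le α β (Nat.lt_succ_iff.mp (Finset.mem_range.mp hi)), one_div]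
    ring_nf
  have h2 : ∏ i ∈ (Finset.Ico (n+1) (2*n+1)).erase (n+1+k),
      (vfun n α β (n+1+k) - vfun n α β i)⁻¹ =
      ((-1 : ℝ) ^ (n - 1 - k) * (Nat.factorial k : ℝ) * (Nat.factorial (n - 1 - k) : ℝ))⁻¹ := by
    have himg : (Finset.Ico (n+1) (2*n+1)).erase (n+1+k) =
        Finset.image (fun a => n + 1 + a) ((Finset.range n).erase k) := by
      ext x
      simp only [Finset.mem_erase, Finset.mem_Ico, Finset.mem_image, Finset.mem_range]
      constructor
      · rintro ⟨hne, hlo, hhi⟩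
        exact ⟨x - (n+1), ⟨by omega, by omega⟩, by omega⟩
      · rintro ⟨a, ⟨hne, ha⟩, rfl⟩
        omega
    rw [himg, Finset.prod_image (by intro a _ b _ h; simp only at h; omega)]
    have : ∀ i ∈ (Finset.range n).erase k,
        (vfun n α β (n+1+k) - vfun n α β (n+1+i))⁻¹ = (((k : ℝ) - (i : ℝ)))⁻¹ := by
      intro i hi
      rw [hv, vfun_gt α β (by omega), show n + 1 + i - (n+1) = i from by omega]
      ring_nf
    rw [Finset.prod_congr rfl this, Finset.prod_inv_distrib]
    congr 1
    have := prod_erase_range (n-1) k (by omega)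
    rw [show n - 1 + 1 = n from Nat.succ_pred_eq_of_pos hn] at this
    rw [this]
  rw [h1, h2, mul_comm]

lemma inv_fact_eq (n j : ℕ) (hj : j ≤ n) :
    ((-1 : ℝ) ^ (n - j) * (Nat.factorial j : ℝ) * (Nat.factorial (n - j) : ℝ))⁻¹ =
      (-1 : ℝ) ^ n * (1 / (Nat.factorial n : ℝ)) * ((-1 : ℝ) ^ j * (Nat.choose n j : ℝ)) := by
  have hc : (Nat.choose n j : ℝ) * (Nat.factorial j : ℝ) * (Nat.factorial (n - j) : ℝ) =
      (Nat.factorial n : ℝ) := by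
    exact_mod_cast Nat.choose_mul_factorial_mul_factorial hj
  have hs : (-1 : ℝ) ^ (n - j) * (-1 : ℝ) ^ j = (-1 : ℝ) ^ n := by
    rw [← pow_add]
    congr 1
    omega
  refine inv_eq_of_mul_eq_one_right ?_
  have hnn : ((-1 : ℝ) ^ n) * ((-1 : ℝ) ^ n) = 1 := by
    rw [← pow_add, ← two_mul, pow_mul]
    norm_num
  have hfn : (Nat.factorial n : ℝ) ≠ 0 := by
    exact_mod_cast Nat.factorial_ne_zero n
  calc ((-1 : ℝ) ^ (n - j) * (Nat.factorial j : ℝ) * (Nat.factorial (n - j) : ℝ)) *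
        ((-1 : ℝ) ^ n * (1 / (Nat.factorial n : ℝ)) * ((-1 : ℝ) ^ j * (Nat.choose n j : ℝ)))
      = ((-1 : ℝ) ^ (n - j) * (-1 : ℝ) ^ j) * (-1 : ℝ) ^ n *
          (((Nat.choose n j : ℝ) * (Nat.factorial j : ℝ) * (Nat.factorial (n - j) : ℝ)) *
            (1 / (Nat.factorial n : ℝ))) := by ring
    _ = (-1 : ℝ) ^ n * (-1 : ℝ) ^ n *
          ((Nat.factorial n : ℝ) * (1 / (Nat.factorial n : ℝ))) := by rw [hs, hc]
    _ = 1 := by rw [hnn, mul_one_div_cancel hfn, mul_one]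

/-- If `deg p ≤ 2n−1` and `α − β ∉ ℤ`, then `G_{1,n−1}^{α,β} + G_{2,n−1}^{β,α} = 0`. -/
theorem G1_add_G2_eq_zero (n : ℕ) (hn : 1 ≤ n) (p : Polynomial ℝ)
    (hp : p.degree ≤ (2 * n - 1 : ℕ))
    (α β : ℝ) (hαβ : ∀ m : ℤ, α - β ≠ (m : ℝ)) :
    G1 n p α β + G2 n p β α = 0 := by
  classical
  have hinj : Set.InjOn (vfun n α β) (Finset.range (2*n+1)) := vfun_injOn n α β hαβ
  have hcard : (Finset.range (2*n+1)).card - 1 = 2*n := by simp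
  have hdeg : p.degree < (((Finset.range (2*n+1)).card - 1 : ℕ) : WithBot ℕ) := by
    rw [hcard]
    refine lt_of_le_of_lt hp ?_
    exact_mod_cast (by omega : 2*n - 1 < 2*n)
  have h0 := sum_nodalWeight_mul_eval (Finset.range (2*n+1)) (vfun n α β) hinj p hdeg
  have hsplit : ∑ i ∈ Finset.range (2*n+1),
        Lagrange.nodalWeight (Finset.range (2*n+1)) (vfun n α β) i * p.eval (vfun n α β i) =
      (∑ i ∈ Finset.range (n+1),
        Lagrange.nodalWeight (Finset.range (2*n+1)) (vfun n α β) i * p.eval (vfun n α β i)) +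
      ∑ i ∈ Finset.Ico (n+1) (2*n+1),
        Lagrange.nodalWeight (Finset.range (2*n+1)) (vfun n α β) i * p.eval (vfun n α β i) := by
    rw [Finset.range_eq_Ico,
      ← Finset.sum_Ico_consecutive _ (Nat.zero_le (n+1)) (by omega : n+1 ≤ 2*n+1),
      ← Finset.range_eq_Ico]
  have hA : ∑ i ∈ Finset.range (n+1),
        Lagrange.nodalWeight (Finset.range (2*n+1)) (vfun n α β) i * p.eval (vfun n α β i) =
      (-1 : ℝ) ^ n * G1 n p α β := by
    rw [G1, Finset.mul_sum, Finset.mul_sum]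
    refine Finset.sum_congr rfl fun j hj => ?_
    have hj' : j ≤ n := Nat.lt_succ_iff.mp (Finset.mem_range.mp hj)
    rw [nodalWeight_low n hn α β hj', vfun_le α β hj', inv_fact_eq n j hj']
    ring
  have hB : ∑ i ∈ Finset.Ico (n+1) (2*n+1),
        Lagrange.nodalWeight (Finset.range (2*n+1)) (vfun n α β) i * p.eval (vfun n α β i) =
      (-1 : ℝ) ^ n * G2 n p β α := by
    rw [Finset.sum_Ico_eq_sum_range, show 2*n+1-(n+1) = n from by omega,
      G2, mul_neg, Finset.mul_sum, Finset.mul_sum, ← Finset.sum_neg_distrib]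
    refine Finset.sum_congr rfl fun k hk => ?_
    have hk' : k < n := Finset.mem_range.mp hk
    have hv : vfun n α β (n+1+k) = β + (k : ℝ) := by
      rw [vfun_gt α β (by omega), show n + 1 + k - (n+1) = k from by omega]
    have hfe := inv_fact_eq (n-1) k (by omega)
    have hpow : (-1 : ℝ) ^ (n - 1) = -(-1 : ℝ) ^ n := by
      have h1 : (-1 : ℝ) ^ n = (-1 : ℝ) ^ (n - 1) * (-1) := by
        rw [← pow_succ, show n - 1 + 1 = n from by omega]
      rw [h1]; ring
    rw [nodalWeight_high n hn α β hk', hv, hfe, hpow]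
    ring
  rw [hsplit, hA, hB, ← mul_add] at h0
  rcases mul_eq_zero.mp h0 with h | h
  · exact absurd h (pow_ne_zero n (by norm_num))
  · exact h
end

section
/- The value of the monic Jacobi–Piñeiro type II multiple orthogonal polynomial at x = 0 is B_{(n,m)}(0) = (−1)^{n+m} (α+1)_n (β+1)_m / ((α+γ+m+n+1)_n (β+γ+m+n+1)_m). -/
/-- The Pochhammer symbol `(z)_k = z(z+1)⋯(z+k−1)`. -/
noncomputable def poch (z : ℝ) (k : ℕ) : ℝ := ∏ i ∈ Finset.range k, (z + (i : ℝ))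

/-- Coefficients of the Jacobi–Piñeiro type II polynomial. -/
noncomputable def JPcoef (α β γ : ℝ) (n m k j : ℕ) : ℝ :=
  poch (γ + j + k + 1) (m - j) * poch (γ + k + m + 1) (n - k) *
    poch (α - k + n + 1) k * poch (β - j - k + m + n + 1) j /
  ((Nat.factorial j : ℝ) * (Nat.factorial k : ℝ) *
    (Nat.factorial (m - j) : ℝ) * (Nat.factorial (n - k) : ℝ))

/-- The normalization constant `N_{n,m}`. -/
noncomputable def JPnorm (α β γ : ℝ) (n m : ℕ) : ℝ :=
  (Nat.factorial n : ℝ) * (Nat.factorial m : ℝ) /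
    (poch (α + γ + n + m + 1) n * poch (β + γ + n + m + 1) m)

/-- The monic Jacobi–Piñeiro type II multiple orthogonal polynomial. -/
noncomputable def JP (α β γ : ℝ) (n m : ℕ) (x : ℝ) : ℝ :=
  JPnorm α β γ n m *
    ∑ k ∈ Finset.range (n + 1), ∑ j ∈ Finset.range (m + 1),
      JPcoef α β γ n m k j * (x - 1) ^ (j + k) * x ^ (n + m - j - k)

lemma poch_pos (z : ℝ) (hz : 0 < z) (k : ℕ) : 0 < poch z k := by
  unfold poch
  exact Finset.prod_pos fun i _ => by positivity

/-- `B_{(n,m)}(0) = (−1)^{n+m} (α+1)_n (β+1)_m /((α+γ+m+n+1)_n (β+γ+m+n+1)_m)`. -/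
theorem jacobi_pineiro_value_at_zero (n m : ℕ) (α β γ : ℝ)
    (hα : -1 < α) (hβ : -1 < β) (hγ : -1 < γ) :
    JP α β γ n m 0
      = (-1 : ℝ) ^ (n + m) * poch (α + 1) n * poch (β + 1) m /
          (poch (α + γ + m + n + 1) n * poch (β + γ + m + n + 1) m) := by
  unfold JP
  rw [Finset.sum_eq_single n (fun k hk hkn => Finset.sum_eq_zero fun j hj => by
      simp only [Finset.mem_range] at hk hj
      rw [zero_pow (by omega : n + m - j - k ≠ 0)]; ring)
    (fun h => absurd (Finset.self_mem_range_succ n) h)]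
  rw [Finset.sum_eq_single m (fun j hj hjm => by
      simp only [Finset.mem_range] at hj
      rw [zero_pow (by omega : n + m - j - n ≠ 0)]; ring)
    (fun h => absurd (Finset.self_mem_range_succ m) h)]
  have e1 : n + m - m - n = 0 := by omega
  rw [e1, pow_zero, mul_one]
  unfold JPnorm JPcoef
  simp only [Nat.sub_self, Nat.factorial_zero, Nat.cast_one]
  have hp0 : ∀ z : ℝ, poch z 0 = 1 := fun z => by simp [poch]
  rw [hp0, hp0]
  have hα' : α - ↑n + ↑n + 1 = α + 1 := by ring
  have hβ' : β - ↑m - ↑n + ↑m + ↑n + 1 = β + 1 := by ring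
  have hA : (α + γ + ↑n + ↑m + 1 : ℝ) = α + γ + ↑m + ↑n + 1 := by ring
  have hB : (β + γ + ↑n + ↑m + 1 : ℝ) = β + γ + ↑m + ↑n + 1 := by ring
  rw [hα', hβ', hA, hB]
  have h01 : ((0 : ℝ) - 1) ^ (m + n) = (-1 : ℝ) ^ (n + m) := by
    rw [Nat.add_comm m n]; norm_num
  rw [h01]
  have hn : (Nat.factorial n : ℝ) ≠ 0 := Nat.cast_ne_zero.mpr (Nat.factorial_ne_zero n)
  have hm : (Nat.factorial m : ℝ) ≠ 0 := Nat.cast_ne_zero.mpr (Nat.factorial_ne_zero m)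
  have hAne : poch (α + γ + ↑m + ↑n + 1) n ≠ 0 := by
    cases n with
    | zero => simp [poch]
    | succ k =>
      refine (poch_pos _ ?_ _).ne'
      push_cast; linarith [Nat.cast_nonneg (α := ℝ) m, Nat.cast_nonneg (α := ℝ) k]
  have hBne : poch (β + γ + ↑m + ↑n + 1) m ≠ 0 := by
    cases m with
    | zero => simp [poch]
    | succ k =>
      refine (poch_pos _ ?_ _).ne'
      push_cast; linarith [Nat.cast_nonneg (α := ℝ) n, Nat.cast_nonneg (α := ℝ) k]
  field_simp
end
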